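/- Let n ≥ 2 and 1 ≤ r < n be integers, let h be a homeomorphism of 𝔠_{n,r}, and let ν be a word such that for every letter l ∈ Fin n, h acts in the same fashion on U_ν and U_{ν⌢[l]}. Then the local action of h at ν is an iterated permutation: there exist a permutation σ of Fin n, c ∈ Fin r, and u ∈ List (Fin n) such that h(ν⌢x) = (c, u followed by σ ∘ x) for every x ∈ 𝔠_n. -/

import Mathlib

open Set

namespace HigmanAut

/-- The one-sided infinite sequence space `𝔠_n` on `n` letters. -/
abbrev Cn (n : ℕ) : Type := ℕ → Fin n

/-- The Cantor space `𝔠_{n,r} = Fin r × (ℕ → Fin n)` (with the product topology,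
`Fin r` and `Fin n` discrete). -/
abbrev CNR (n r : ℕ) : Type := Fin r × Cn n

/-- A word: a letter from `Fin r` together with a finite list over `Fin n`. -/
abbrev Word (n r : ℕ) : Type := Fin r × List (Fin n)

/-- Self-homeomorphisms of `𝔠_{n,r}`. -/
abbrev Homeo (n r : ℕ) : Type := CNR n r ≃ₜ CNR n r

/-- Append a finite list to a word: `ν⌢w`. -/
def wApp {n r : ℕ} (ν : Word n r) (w : List (Fin n)) : Word n r := (ν.1, ν.2 ++ w)

/-- The point `ν⌢x` of `𝔠_{n,r}` determined by a word `ν` followed by `x ∈ 𝔠_n`. -/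
def wCat {n r : ℕ} (ν : Word n r) (x : Cn n) : CNR n r :=
  (ν.1, fun i => if h : i < ν.2.length then ν.2.get ⟨i, h⟩ else x (i - ν.2.length))

/-- The cone `U_ν` of a word `ν`. -/
def cone {n r : ℕ} (ν : Word n r) : Set (CNR n r) :=
  {p | p.1 = ν.1 ∧ ∀ (i : ℕ) (h : i < ν.2.length), p.2 i = ν.2.get ⟨i, h⟩}

/-- Membership in the Higman--Thompson group `G_{n,r}`: `g` is a prefix code map,
i.e. there are `k ≥ 1` and words `ν i`, `η i` whose cones partition `𝔠_{n,r}`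
with `g(ν i ⌢ x) = η i ⌢ x` for all `i`, `x`. -/
def IsHigman {n r : ℕ} (g : Homeo n r) : Prop :=
  ∃ k : ℕ, 0 < k ∧ ∃ ν η : Fin k → Word n r,
    (∀ p : CNR n r, ∃! i : Fin k, p ∈ cone (ν i)) ∧
    (∀ p : CNR n r, ∃! i : Fin k, p ∈ cone (η i)) ∧
    (∀ (i : Fin k) (x : Cn n), g (wCat (ν i) x) = wCat (η i) x)

/-- The Higman--Thompson group `G_{n,r}` as a set of homeomorphisms. -/
def higmanSet (n r : ℕ) : Set (Homeo n r) := {g | IsHigman g}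

/-- Conjugation: in the paper's right-action notation this is `g ↦ h⁻¹ g h`
(as a left function, `x ↦ h (g (h⁻¹ x))`). -/
def conjH {n r : ℕ} (h g : Homeo n r) : Homeo n r := (h.symm.trans g).trans h

/-- `h` acts in the same fashion on `U_α` and `U_β`: there are words `α'`, `β'`
and a common local action `f` with `h(α⌢x) = α'⌢f(x)` and `h(β⌢x) = β'⌢f(x)`. -/
def SameFashion {n r : ℕ} (h : Homeo n r) (α β : Word n r) : Prop :=
  ∃ (α' β' : Word n r) (f : Cn n → Cn n),
    (∀ x : Cn n, h (wCat α x) = wCat α' (f x)) ∧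
    (∀ x : Cn n, h (wCat β x) = wCat β' (f x))

/-- Tail equivalence on `𝔠_{n,r}`. -/
def TailEq {n r : ℕ} (x y : CNR n r) : Prop :=
  ∃ (ν η : Word n r) (z : Cn n), x = wCat ν z ∧ y = wCat η z

/-- `h` is pointwise canonical. -/
def PtwiseCanonical {n r : ℕ} (h : Homeo n r) : Prop :=
  ∀ x : CNR n r, ∃ (η₁ η₂ : Word n r) (y : Cn n), x = wCat η₁ y ∧ h x = wCat η₂ y

/-- `h` is densely canonical. -/
def DenselyCanonical {n r : ℕ} (h : Homeo n r) : Prop :=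
  ∀ U : Set (CNR n r), IsOpen U → U.Nonempty →
    ∃ η ζ : Word n r, cone η ⊆ U ∧ ∀ x : Cn n, h (wCat η x) = wCat ζ x

/-- `h` belongs to `H_{n,r,∼}`: `x ∼ y` iff `h(x) ∼ h(y)`. -/
def PreservesTailEq {n r : ℕ} (h : Homeo n r) : Prop :=
  ∀ x y : CNR n r, TailEq x y ↔ TailEq (h x) (h y)

/-- `ν` is a prefix of `η`, i.e. `U_η ⊆ U_ν`. -/
def WPrefix {n r : ℕ} (ν η : Word n r) : Prop := cone η ⊆ cone ν

/-- Two words are incomparable if neither is a prefix of the other. -/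
def Incomp {n r : ℕ} (ν η : Word n r) : Prop := ¬ WPrefix ν η ∧ ¬ WPrefix η ν


/-! ### Auxiliary lemmas -/

/-- In a countable product of discrete spaces, an open set contains a cylinder
around each of its points. -/
lemma exists_depth {n : ℕ} {U : Set (Cn n)} (hU : IsOpen U) {z : Cn n} (hz : z ∈ U) :
    ∃ m : ℕ, ∀ z' : Cn n, (∀ i < m, z' i = z i) → z' ∈ U := by
  obtain ⟨S, hS, hzS, hSU⟩ :=
    (isTopologicalBasis_pi
      (fun _ : ℕ => TopologicalSpace.isTopologicalBasis_opens)).exists_subset_of_mem_open hz hU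
  obtain ⟨V, F, hV, rfl⟩ := hS
  classical
  refine ⟨(F.sup id) + 1, fun z' hz' => hSU ?_⟩
  intro i hi
  have : z' i = z i := hz' i (by
    have : i ≤ F.sup id := Finset.le_sup (f := id) hi
    omega)
  rw [this]
  exact hzS i hi

/-- Uniform depth: a compact set inside an open set admits a uniform cylinder depth. -/
lemma uniform_depth {n : ℕ} {K U : Set (Cn n)} (hK : IsCompact K) (hU : IsOpen U)
    (hKU : K ⊆ U) : ∃ M : ℕ, ∀ z ∈ K, ∀ z' : Cn n, (∀ i < M, z' i = z i) → z' ∈ U := by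
  classical
  have hdep : ∀ z : Cn n, ∃ m : ℕ, z ∈ K → ∀ z' : Cn n, (∀ i < m, z' i = z i) → z' ∈ U := by
    intro z
    by_cases hz : z ∈ K
    · obtain ⟨m, hm⟩ := exists_depth hU (hKU hz)
      exact ⟨m, fun _ => hm⟩
    · exact ⟨0, fun h => absurd h hz⟩
  choose m hm using hdep
  have hcov : ∀ z ∈ K, {z' : Cn n | ∀ i < m z, z' i = z i} ∈ nhds z := by
    intro z hz
    have hopen : IsOpen {z' : Cn n | ∀ i < m z, z' i = z i} := by
      have : {z' : Cn n | ∀ i < m z, z' i = z i} = ⋂ i : Fin (m z), {z' : Cn n | z' i = z i} := by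
        ext z'; simp [Fin.forall_iff]
      rw [this]
      refine isOpen_iInter_of_finite fun i => ?_
      have : {z' : Cn n | z' (i:ℕ) = z (i:ℕ)} = (fun z' : Cn n => z' (i:ℕ)) ⁻¹' {z (i:ℕ)} := rfl
      rw [this]
      exact (continuous_apply (i : ℕ)).isOpen_preimage _ (isOpen_discrete _)
    exact hopen.mem_nhds (fun i _ => rfl)
  obtain ⟨t, htK, hcover⟩ := hK.elim_nhds_subcover _ hcov
  refine ⟨t.sup m, fun z hz z' hz' => ?_⟩
  obtain ⟨w, hw, hzw⟩ := Set.mem_iUnion₂.1 (hcover hz)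
  refine hm w (htK w hw) z' (fun i hi => ?_)
  have him : i < t.sup m := lt_of_lt_of_le hi (Finset.le_sup hw)
  rw [hz' i him]
  exact hzw i hi

/-- Prepend a letter to a sequence. -/
def co {n : ℕ} (l : Fin n) (x : Cn n) : Cn n := fun i => Nat.casesOn i l x

@[simp] lemma co_zero {n : ℕ} (l : Fin n) (x : Cn n) : co l x 0 = l := rfl
@[simp] lemma co_succ {n : ℕ} (l : Fin n) (x : Cn n) (i : ℕ) : co l x (i + 1) = x i := rfl

lemma co_head_tail {n : ℕ} (x : Cn n) : x = co (x 0) (fun i => x (i + 1)) := by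
  funext i; cases i <;> rfl

lemma wCat_fst {n r : ℕ} (w : Word n r) (y : Cn n) : (wCat w y).1 = w.1 := rfl

lemma wCat_snd {n r : ℕ} (w : Word n r) (y : Cn n) (i : ℕ) :
    (wCat w y).2 i = if h : i < w.2.length then w.2.get ⟨i, h⟩ else y (i - w.2.length) := rfl

lemma wCat_injective {n r : ℕ} (ν : Word n r) : Function.Injective (wCat ν) := by
  intro x y hxy
  funext i
  have := congrArg (fun p : CNR n r => p.2 (i + ν.2.length)) hxy
  simpa [wCat] using this

lemma wCat_continuous {n r : ℕ} (ν : Word n r) : Continuous (wCat ν) := by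
  refine Continuous.prodMk continuous_const (continuous_pi fun i => ?_)
  by_cases hi : i < ν.2.length
  · simp only [hi, dif_pos]; exact continuous_const
  · simp only [hi, dif_neg, not_false_iff]; exact continuous_apply _

lemma isOpen_range_wCat {n r : ℕ} (ν : Word n r) : IsOpen (range (wCat ν)) := by
  have : range (wCat ν) =
      {p : CNR n r | p.1 = ν.1} ∩ ⋂ i : Fin ν.2.length, {p : CNR n r | p.2 i = ν.2.get i} := by
    ext p
    constructor
    · rintro ⟨x, rfl⟩
      refine ⟨rfl, ?_⟩
      simp only [Set.mem_iInter, Set.mem_setOf_eq]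
      intro i
      simp [wCat, i.2]
    · rintro ⟨h1, h2⟩
      simp only [Set.mem_iInter, Set.mem_setOf_eq] at h2
      refine ⟨fun j => p.2 (j + ν.2.length), ?_⟩
      refine Prod.ext h1.symm ?_
      funext i
      simp only [wCat]
      by_cases hi : i < ν.2.length
      · simp only [hi, dif_pos]
        exact (h2 ⟨i, hi⟩).symm
      · simp only [hi, dif_neg, not_false_iff]
        have h3 : i - ν.2.length + ν.2.length = i := by omega
        rw [h3]
  rw [this]
  refine IsOpen.inter ?_ (isOpen_iInter_of_finite fun i => ?_)
  · have : {p : CNR n r | p.1 = ν.1} = Prod.fst ⁻¹' {ν.1} := rfl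
    rw [this]; exact continuous_fst.isOpen_preimage _ (isOpen_discrete _)
  · have : {p : CNR n r | p.2 (i:ℕ) = ν.2.get i} =
        (fun p : CNR n r => p.2 (i:ℕ)) ⁻¹' {ν.2.get i} := rfl
    rw [this]
    exact ((continuous_apply (i:ℕ)).comp continuous_snd).isOpen_preimage _ (isOpen_discrete _)

lemma wCat_wApp_co {n r : ℕ} (ν : Word n r) (l : Fin n) (x : Cn n) :
    wCat (wApp ν [l]) x = wCat ν (co l x) := by
  refine Prod.ext rfl ?_
  funext i
  simp only [wCat, wApp, List.length_append, List.length_singleton]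
  rcases Nat.lt_trichotomy i ν.2.length with hi | hi | hi
  · have h1 : i < ν.2.length + 1 := by omega
    simp only [hi, h1, dif_pos]
    simp [List.getElem_append_left, hi]
  · subst hi
    have h1 : ν.2.length < ν.2.length + 1 := by omega
    have h2 : ¬ (ν.2.length < ν.2.length) := by omega
    simp only [h1, h2, dif_pos, dif_neg, not_false_iff]
    simp [co]
  · have h1 : ¬ (i < ν.2.length + 1) := by omega
    have h2 : ¬ (i < ν.2.length) := by omega
    simp only [h1, h2, dif_neg, not_false_iff]
    have h3 : i - ν.2.length = (i - (ν.2.length + 1)) + 1 := by omega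
    rw [h3, co_succ]

/-- Extend a finite word to an infinite sequence by a default letter. -/
def ext0 {n : ℕ} (d : Fin n) (L : ℕ) (w : Fin L → Fin n) : Cn n :=
  fun i => if h : i < L then w ⟨i, h⟩ else d

/-- The finite approximations to `F` at depth `L`. -/
noncomputable def SF {n : ℕ} (d : Fin n) (F : Set (Cn n)) (L : ℕ) : Finset (Fin L → Fin n) :=
  @Finset.filter _ (fun w => ext0 d L w ∈ F) (fun _ => Classical.propDecidable _) Finset.univ

lemma mem_SF {n : ℕ} {d : Fin n} {F : Set (Cn n)} {L : ℕ} {w : Fin L → Fin n} :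
    w ∈ SF d F L ↔ ext0 d L w ∈ F := by
  simp [SF, Finset.mem_filter]

lemma SF_card_succ {n : ℕ} (d : Fin n) (F : Set (Cn n)) (M : ℕ)
    (hdet : ∀ z ∈ F, ∀ z' : Cn n, (∀ i < M, z' i = z i) → z' ∈ F)
    (L : ℕ) (hML : M ≤ L) :
    (SF d F (L + 1)).card = (SF d F L).card * n := by
  classical
  have key : ∀ (w : Fin (L+1) → Fin n) (v : Fin L → Fin n),
      (∀ i : Fin L, w i.castSucc = v i) → (ext0 d (L+1) w ∈ F ↔ ext0 d L v ∈ F) := by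
    intro w v hwv
    have hagree : ∀ i < L, ext0 d L v i = ext0 d (L+1) w i := by
      intro i hi
      simp only [ext0, hi, dif_pos, show i < L + 1 by omega]
      exact (hwv ⟨i, hi⟩).symm
    constructor
    · intro hw
      exact hdet _ hw _ (fun i hi => hagree i (lt_of_lt_of_le hi hML))
    · intro hv
      refine hdet _ hv _ (fun i hi => (hagree i (lt_of_lt_of_le hi hML)).symm)
  have hcard : (SF d F (L+1)).card = ((SF d F L) ×ˢ (Finset.univ : Finset (Fin n))).card := by
    refine Finset.card_nbij' (fun w => (fun i => w i.castSucc, w (Fin.last L)))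
      (fun p => Fin.snoc p.1 p.2) ?_ ?_ ?_ ?_
    · intro w hw
      rw [Finset.mem_coe, mem_SF] at hw
      rw [Finset.mem_coe, Finset.mem_product]
      exact ⟨mem_SF.2 ((key w _ (fun i => rfl)).1 hw), Finset.mem_univ _⟩
    · intro p hp
      rw [Finset.mem_coe, Finset.mem_product] at hp
      rw [Finset.mem_coe, mem_SF]
      refine (key _ p.1 (fun i => ?_)).2 (mem_SF.1 hp.1)
      exact Fin.snoc_castSucc _ _ _
    · intro w _
      funext i
      induction i using Fin.lastCases with
      | last => simp
      | cast i => simp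
    · intro p _
      simp
  rw [hcard, Finset.card_product, Finset.card_univ, Fintype.card_fin]

lemma SF_card_add {n : ℕ} (d : Fin n) (F : Set (Cn n)) (M : ℕ)
    (hdet : ∀ z ∈ F, ∀ z' : Cn n, (∀ i < M, z' i = z i) → z' ∈ F) (t : ℕ) :
    (SF d F (M + t)).card = (SF d F M).card * n ^ t := by
  induction t with
  | zero => simp
  | succ t ih =>
      have : M + (t + 1) = (M + t) + 1 := by omega
      rw [this, SF_card_succ d F M hdet (M + t) (by omega), ih, pow_succ, mul_assoc]

set_option linter.unreachableTactic false in
set_option linter.unusedTactic false in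
/-- The key counting argument: if a nonempty compact open `F ⊆ 𝔠_n` is partitioned
by `n` prefix-substitution maps with prefix lengths `k l ≥ 1`, then all `k l = 1`. -/
lemma keyCount {n : ℕ} (hn : 2 ≤ n) (F : Set (Cn n)) (hFne : F.Nonempty)
    (hFcomp : IsCompact F) (hFop : IsOpen F) (k : Fin n → ℕ) (hk1 : ∀ l, 1 ≤ k l)
    (e : Fin n → Cn n) (push : Fin n → Cn n → Cn n)
    (hpushdef : ∀ l z j, push l z j = if j < k l then e l j else z (j - k l))
    (hPlF : ∀ l, push l '' F ⊆ F)
    (hcov : ∀ z ∈ F, ∃ l, z ∈ push l '' F)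
    (hdisj : ∀ l m, l ≠ m → ∀ z, z ∈ push l '' F → z ∈ push m '' F → False) :
    ∀ l, k l = 1 := by
  classical
  have hn0 : 0 < n := by omega
  set d : Fin n := ⟨0, hn0⟩ with hd
  have hpcont : ∀ l, Continuous (push l) := by
    intro l
    have : push l = fun z (j : ℕ) => if j < k l then e l j else z (j - k l) := by
      funext z j; exact hpushdef l z j
    rw [this]
    refine continuous_pi fun j => ?_
    by_cases hj : j < k l
    · simp only [hj, if_pos]; exact continuous_const
    · simp only [hj, if_neg, not_false_iff]; exact continuous_apply _
  have hPlcomp : ∀ l, IsCompact (push l '' F) := fun l => hFcomp.image (hpcont l)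
  obtain ⟨M0, hM0⟩ := uniform_depth hFcomp hFop (subset_refl F)
  have hsepex : ∀ l m : Fin n, ∃ Mp : ℕ, l ≠ m →
      ∀ z ∈ push l '' F, ∀ z' : Cn n, (∀ i < Mp, z' i = z i) → z' ∉ push m '' F := by
    intro l m
    by_cases hlm : l = m
    · exact ⟨0, fun hne => absurd hlm hne⟩
    · have hsub : push l '' F ⊆ (push m '' F)ᶜ := by
        intro z hz hz'
        exact hdisj l m hlm z hz hz'
      obtain ⟨Mp, hMp⟩ := uniform_depth (hPlcomp l) (hPlcomp m).isClosed.isOpen_compl hsub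
      exact ⟨Mp, fun _ => hMp⟩
  choose Mp hMp using hsepex
  set M : ℕ := M0 + (Finset.univ.sup fun p : Fin n × Fin n => Mp p.1 p.2)
      + (Finset.univ.sup k) + 1 with hM
  have hMM0 : M0 ≤ M := by omega
  have hMk : ∀ l, k l < M := by
    intro l
    have : k l ≤ Finset.univ.sup k := Finset.le_sup (Finset.mem_univ l)
    omega
  have hM1 : 1 ≤ M := by omega
  have hdet : ∀ z ∈ F, ∀ z' : Cn n, (∀ i < M, z' i = z i) → z' ∈ F := by
    intro z hz z' hz'
    exact hM0 z hz z' (fun i hi => hz' i (by omega))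
  have hsep : ∀ l m : Fin n, l ≠ m → ∀ z ∈ push l '' F, ∀ z' : Cn n,
      (∀ i < M, z' i = z i) → z' ∉ push m '' F := by
    intro l m hlm z hz z' hz'
    refine hMp l m hlm z hz z' (fun i hi => hz' i ?_)
    have : Mp l m ≤ Finset.univ.sup fun p : Fin n × Fin n => Mp p.1 p.2 :=
      Finset.le_sup (f := fun p : Fin n × Fin n => Mp p.1 p.2) (Finset.mem_univ (l, m))
    omega
  have hk2M : ∀ l, k l ≤ 2 * M := fun l => by have := hMk l; omega
  set Φ : (l : Fin n) → (Fin (2*M - k l) → Fin n) → (Fin (2*M) → Fin n) :=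
    fun l v j => if h : (j : ℕ) < k l then e l j
      else v ⟨(j : ℕ) - k l, by have := j.2; have := hMk l; omega⟩ with hΦ
  have hΦagree : ∀ (l : Fin n) (v : Fin (2*M - k l) → Fin n) (i : ℕ), i < 2*M →
      ext0 d (2*M) (Φ l v) i = push l (ext0 d (2*M - k l) v) i := by
    intro l v i hi
    rw [hpushdef]
    simp only [ext0, hi, dif_pos, hΦ]
    by_cases hik : i < k l
    · simp only [hik, dif_pos, if_pos]
    · simp only [hik, dif_neg, not_false_iff, if_neg]
      have h2 : i - k l < 2*M - k l := by have := hMk l; omega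
      simp only [h2, dif_pos]
  have hΦmem : ∀ (l : Fin n) (v : Fin (2*M - k l) → Fin n),
      v ∈ SF d F (2*M - k l) → Φ l v ∈ SF d F (2*M) := by
    intro l v hv
    rw [mem_SF] at hv ⊢
    have hz : push l (ext0 d (2*M - k l) v) ∈ F :=
      hPlF l ⟨_, hv, rfl⟩
    exact hdet _ hz _ (fun i hi => hΦagree l v i (by omega))
  have hΦinj : ∀ l, Function.Injective (Φ l) := by
    intro l v v' hvv'
    funext i
    have h2 : (i : ℕ) + k l < 2*M := by have := i.2; have := hMk l; omega
    have := congrFun hvv' ⟨(i : ℕ) + k l, h2⟩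
    simp only [hΦ] at this
    have h3 : ¬ ((i:ℕ) + k l < k l) := by have := hk1 l; omega
    simp only [h3, dif_neg, not_false_iff] at this
    have h4 : (i:ℕ) + k l - k l = (i : ℕ) := by omega
    simpa [h4] using this
  have hcover : ∀ w ∈ SF d F (2*M), ∃ l, w ∈ (SF d F (2*M - k l)).image (Φ l) := by
    intro w hw
    rw [mem_SF] at hw
    obtain ⟨l, z', hz'F, hz'⟩ := hcov _ hw
    refine ⟨l, Finset.mem_image.2 ⟨fun i => z' i, ?_, ?_⟩⟩
    · rw [mem_SF]
      refine hdet _ hz'F _ (fun i hi => ?_)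
      have h2 : i < 2*M - k l := by have := hMk l; omega
      simp [ext0, h2]
    · funext j
      have hj2M : (j : ℕ) < 2 * M := j.2
      have hthis := congrFun hz' (j : ℕ)
      rw [hpushdef] at hthis
      simp only [ext0, hj2M, dif_pos] at hthis
      simp only [hΦ]
      by_cases hjk : (j : ℕ) < k l
      · simp only [hjk, dif_pos]
        rw [if_pos hjk] at hthis
        exact hthis
      · simp only [hjk, dif_neg, not_false_iff]
        rw [if_neg hjk] at hthis
        exact hthis
  have himdisj : ∀ l m : Fin n, l ≠ m →
      Disjoint ((SF d F (2*M - k l)).image (Φ l)) ((SF d F (2*M - k m)).image (Φ m)) := by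
    intro l m hlm
    rw [Finset.disjoint_left]
    intro w hwl hwm
    obtain ⟨v, hv, hvw⟩ := Finset.mem_image.1 hwl
    obtain ⟨v', hv', hvw'⟩ := Finset.mem_image.1 hwm
    have hz1 : push l (ext0 d (2*M - k l) v) ∈ push l '' F :=
      ⟨_, mem_SF.1 hv, rfl⟩
    have hz2 : push m (ext0 d (2*M - k m) v') ∈ push m '' F :=
      ⟨_, mem_SF.1 hv', rfl⟩
    refine hsep l m hlm _ hz1 _ (fun i hi => ?_) hz2
    rw [← hΦagree l v i (by omega), ← hΦagree m v' i (by omega), hvw, hvw']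
  have hbiUnion : SF d F (2*M) =
      Finset.univ.biUnion (fun l => (SF d F (2*M - k l)).image (Φ l)) := by
    ext w
    rw [Finset.mem_biUnion]
    constructor
    · intro hw
      obtain ⟨l, hl⟩ := hcover w hw
      exact ⟨l, Finset.mem_univ l, hl⟩
    · rintro ⟨l, -, hl⟩
      obtain ⟨v, hv, rfl⟩ := Finset.mem_image.1 hl
      exact hΦmem l v hv
  have hcardsum : (SF d F (2*M)).card =
      ∑ l : Fin n, (SF d F (2*M - k l)).card := by
    rw [hbiUnion, Finset.card_biUnion (fun l _ m _ hlm => himdisj l m hlm)]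
    refine Finset.sum_congr rfl (fun l _ => ?_)
    exact Finset.card_image_of_injective _ (hΦinj l)
  set C : ℕ := (SF d F M).card with hC
  have hCpos : 0 < C := by
    obtain ⟨z, hz⟩ := hFne
    refine Finset.card_pos.2 ⟨fun i => z i, mem_SF.2 ?_⟩
    refine hdet _ hz _ (fun i hi => ?_)
    simp [ext0, hi]
  have h2Mcard : (SF d F (2*M)).card = C * n ^ M := by
    rw [show 2*M = M + M by omega]
    exact SF_card_add d F M hdet M
  have hklcard : ∀ l, (SF d F (2*M - k l)).card = C * n ^ (M - k l) := by
    intro l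
    rw [show 2*M - k l = M + (M - k l) by have := hMk l; omega]
    exact SF_card_add d F M hdet (M - k l)
  have hpoweq : n ^ M = ∑ l : Fin n, n ^ (M - k l) := by
    have : C * n ^ M = C * ∑ l : Fin n, n ^ (M - k l) := by
      rw [← h2Mcard, hcardsum, Finset.mul_sum]
      exact Finset.sum_congr rfl (fun l _ => hklcard l)
    exact Nat.eq_of_mul_eq_mul_left hCpos this
  intro l
  by_contra hkl
  have hkl2 : 2 ≤ k l := by have := hk1 l; omega
  have hlt : ∑ l : Fin n, n ^ (M - k l) < ∑ _l : Fin n, n ^ (M - 1) := by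
    refine Finset.sum_lt_sum (fun m _ => ?_) ⟨l, Finset.mem_univ l, ?_⟩
    · exact Nat.pow_le_pow_right (by omega) (by have := hk1 m; omega)
    · refine Nat.pow_lt_pow_right (by omega) ?_
      have := hMk l
      omega
  have hsumconst : ∑ _l : Fin n, n ^ (M - 1) = n ^ M := by
    rw [Finset.sum_const, Finset.card_univ, Fintype.card_fin, smul_eq_mul]
    rw [← pow_succ']
    congr 1 <;> omega
  rw [hsumconst] at hlt
  omega

/-- If `h` acts in the same fashion on `U_ν` and each child cone
`U_{ν⌢[l]}`, then the local action of `h` at `ν` is an iterated permutation. -/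
theorem same_fashion_on_children_iterated_permutation (n r : ℕ) (hn : 2 ≤ n)
    (hr1 : 1 ≤ r) (hrn : r < n) (h : Homeo n r) (ν : Word n r)
    (hsf : ∀ l : Fin n, SameFashion h ν (wApp ν [l])) :
    ∃ (σ : Equiv.Perm (Fin n)) (c : Fin r) (u : List (Fin n)),
      ∀ x : Cn n, h (wCat ν x) = wCat (c, u) (fun i => σ (x i)) := by
  classical
  choose α β fl hsf' using hsf
  have hl1 : ∀ (l : Fin n) (x : Cn n), h (wCat ν x) = wCat (α l) (fl l x) :=
    fun l => (hsf' l).1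
  have hl2 : ∀ (l : Fin n) (x : Cn n), h (wCat (wApp ν [l]) x) = wCat (β l) (fl l x) :=
    fun l => (hsf' l).2
  set g : Cn n → CNR n r := fun x => h (wCat ν x) with hgdef
  have hgw : ∀ (l : Fin n) (x : Cn n), g x = wCat (α l) (fl l x) := by
    intro l x; simp only [hgdef]; exact hl1 l x
  have hco : ∀ (l : Fin n) (x : Cn n), g (co l x) = wCat (β l) (fl l x) := by
    intro l x
    simp only [hgdef]
    rw [← wCat_wApp_co]
    exact hl2 l x
  have hginj : Function.Injective g := by
    intro x y hxy
    exact wCat_injective ν (h.injective hxy)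
  have hgcont : Continuous g := h.continuous.comp (wCat_continuous ν)
  have hn0 : 0 < n := by omega
  set z0 : Fin n := ⟨0, by omega⟩ with hz0
  set z1 : Fin n := ⟨1, by omega⟩ with hz1
  set x₀ : Cn n := fun _ => z0 with hx₀
  have hz01 : z0 ≠ z1 := by
    intro hcon
    have := congrArg Fin.val hcon
    simp [hz0, hz1] at this
  -- first components are constant
  have hfst : ∀ x : Cn n, (g x).1 = (g x₀).1 := by
    intro x
    have h1 : (g x).1 = (α z0).1 := by rw [hgw z0 x, wCat_fst]
    have h2 : (g x₀).1 = (α z0).1 := by rw [hgw z0 x₀, wCat_fst]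
    rw [h1, h2]
  -- the first place where the second components are not constant
  have hNex : ∃ j : ℕ, ∃ x y : Cn n, (g x).2 j ≠ (g y).2 j := by
    by_contra hcon
    push_neg at hcon
    have hne : x₀ ≠ (fun _ => z1) := by
      intro hcon2
      exact hz01 (congrFun hcon2 0)
    apply hne
    apply hginj
    refine Prod.ext ((hfst x₀).trans (hfst _).symm) (funext fun j => ?_)
    exact hcon j x₀ _
  set N : ℕ := Nat.find hNex with hNdef
  have hNspec : ∃ x y : Cn n, (g x).2 N ≠ (g y).2 N := Nat.find_spec hNex
  have hNlow : ∀ i, i < N → ∀ x y : Cn n, (g x).2 i = (g y).2 i := by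
    intro i hi x y
    by_contra hc
    exact (Nat.find_min hNex hi) ⟨x, y, hc⟩
  set f : Cn n → Cn n := fun x j => (g x).2 (j + N) with hfdef
  have hgsnd : ∀ (x : Cn n) (i : ℕ), (g x).2 i = if i < N then (g x₀).2 i else f x (i - N) := by
    intro x i
    by_cases hi : i < N
    · rw [if_pos hi]; exact hNlow i hi x x₀
    · rw [if_neg hi]
      show _ = (g x).2 (i - N + N)
      have h2 : i - N + N = i := by omega
      rw [h2]
  have hfinj : Function.Injective f := by
    intro x y hxy
    apply hginj
    refine Prod.ext ((hfst x).trans (hfst y).symm) (funext fun i => ?_)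
    rw [hgsnd x i, hgsnd y i, hxy]
  have hfcont : Continuous f := by
    refine continuous_pi fun j => ?_
    exact (continuous_apply (j + N)).comp (continuous_snd.comp hgcont)
  have hfne0 : ∃ x y : Cn n, f x 0 ≠ f y 0 := by
    obtain ⟨x, y, hxy⟩ := hNspec
    refine ⟨x, y, ?_⟩
    show (g x).2 (0 + N) ≠ (g y).2 (0 + N)
    simpa using hxy
  -- the length of α l is at most N
  have hple : ∀ l : Fin n, (α l).2.length ≤ N := by
    intro l
    by_contra hc
    push_neg at hc
    obtain ⟨x, y, hxy⟩ := hNspec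
    apply hxy
    have e1 : (g x).2 N = (α l).2.get ⟨N, hc⟩ := by
      rw [hgw l x, wCat_snd, dif_pos hc]
    have e2 : (g y).2 N = (α l).2.get ⟨N, hc⟩ := by
      rw [hgw l y, wCat_snd, dif_pos hc]
    rw [e1, e2]
  have hflval : ∀ (l : Fin n) (x : Cn n) (t : ℕ),
      fl l x t = (g x).2 (t + (α l).2.length) := by
    intro l x t
    rw [hgw l x, wCat_snd, dif_neg (by omega)]
    congr 1
    omega
  -- the length of β l exceeds that of α l
  have hqgt : ∀ l : Fin n, (α l).2.length < (β l).2.length := by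
    intro l
    by_contra hc
    push_neg at hc
    -- hc : (β l).2.length ≤ (α l).2.length
    have hpN := hple l
    have key : ∀ x : Cn n,
        (g x).2 N = (g (co l x)).2 ((β l).2.length + (N - (α l).2.length)) := by
      intro x
      rw [hco l x, wCat_snd, dif_neg (by omega)]
      have h2 : (β l).2.length + (N - (α l).2.length) - (β l).2.length
          = N - (α l).2.length := by omega
      rw [h2, hflval l x]
      have h3 : N - (α l).2.length + (α l).2.length = N := by omega
      rw [h3]
    rcases lt_or_eq_of_le hc with hlt | heq
    · -- strictly shorter: the value at N would be constant
      obtain ⟨x, y, hxy⟩ := hNspec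
      apply hxy
      have hiN : (β l).2.length + (N - (α l).2.length) < N := by omega
      rw [key x, key y]
      exact hNlow _ hiN (co l x) (co l y)
    · -- equal lengths: f ∘ (co l) = f, contradicting injectivity
      have hfeq : ∀ x : Cn n, f (co l x) = f x := by
        intro x
        funext j
        show (g (co l x)).2 (j + N) = (g x).2 (j + N)
        rw [hco l x, wCat_snd, dif_neg (by omega), hflval l x]
        have h3 : j + N - (β l).2.length + (α l).2.length = j + N := by omega
        rw [h3]
      set m : Fin n := if l = z0 then z1 else z0 with hm
      have hml : m ≠ l := by
        by_cases hl : l = z0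
        · rw [hm, if_pos hl, hl]; exact fun hcon => hz01 hcon.symm
        · rw [hm, if_neg hl]; exact fun hcon => hl hcon.symm
      have : co l (fun _ => m) = (fun _ => m) := hfinj (hfeq (fun _ => m))
      exact hml (congrFun this 0).symm
  set k : Fin n → ℕ := fun l => (β l).2.length - (α l).2.length with hk
  have hk1 : ∀ l, 1 ≤ k l := by
    intro l
    have := hqgt l
    simp only [hk]
    omega
  -- the fundamental prefix-substitution structure of f
  have hpushkey : ∀ (l : Fin n) (x : Cn n) (j : ℕ),
      f (co l x) j = if j < k l then f (co l x₀) j else f x (j - k l) := by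
    intro l x j
    have hpN := hple l
    have hq := hqgt l
    have hkl : k l = (β l).2.length - (α l).2.length := rfl
    have expand : ∀ y : Cn n, f (co l y) j =
        if hjq : j + N < (β l).2.length then (β l).2.get ⟨j + N, hjq⟩
        else (g y).2 (j + N - (β l).2.length + (α l).2.length) := by
      intro y
      show (g (co l y)).2 (j + N) = _
      rw [hco l y, wCat_snd]
      by_cases hjq : j + N < (β l).2.length
      · rw [dif_pos hjq, dif_pos hjq]
      · rw [dif_neg hjq, dif_neg hjq, hflval l y]
    by_cases hj : j < k l
    · rw [if_pos hj, expand x, expand x₀]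
      by_cases hjq : j + N < (β l).2.length
      · rw [dif_pos hjq, dif_pos hjq]
      · rw [dif_neg hjq, dif_neg hjq]
        refine hNlow _ ?_ x x₀
        rw [hkl] at hj
        omega
    · rw [if_neg hj, expand x]
      rw [hkl] at hj
      rw [dif_neg (by omega)]
      show _ = (g x).2 (j - k l + N)
      rw [hkl]
      have harith : j + N - (β l).2.length + (α l).2.length
          = j - ((β l).2.length - (α l).2.length) + N := by omega
      rw [harith]
  -- the image of f is nonempty, compact and open
  set F : Set (Cn n) := Set.range f with hF
  have hFne : F.Nonempty := ⟨f x₀, ⟨x₀, rfl⟩⟩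
  have hFcomp : IsCompact F := isCompact_range hfcont
  have hrgopen : IsOpen (range g) := by
    rw [show g = h ∘ wCat ν from rfl, Set.range_comp]
    exact h.isOpenMap _ (isOpen_range_wCat ν)
  have hFop : IsOpen F := by
    have hset : F = (fun z : Cn n =>
        (((g x₀).1 : Fin r), fun i => if i < N then (g x₀).2 i else z (i - N)))
          ⁻¹' (range g) := by
      ext z
      constructor
      · rintro ⟨x, rfl⟩
        refine ⟨x, ?_⟩
        refine Prod.ext (hfst x) (funext fun i => ?_)
        exact hgsnd x i
      · rintro ⟨x, hx⟩
        refine ⟨x, ?_⟩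
        funext j
        have := congrArg (fun p : CNR n r => p.2 (j + N)) hx
        simp only at this
        rw [if_neg (by omega)] at this
        have h2 : j + N - N = j := by omega
        rw [h2] at this
        exact this
    rw [hset]
    refine hrgopen.preimage ?_
    refine Continuous.prodMk continuous_const (continuous_pi fun i => ?_)
    by_cases hi : i < N
    · simp only [hi, if_pos]; exact continuous_const
    · simp only [hi, if_neg, not_false_iff]; exact continuous_apply _
  -- the substitution maps
  set push : Fin n → Cn n → Cn n :=
    fun l z j => if j < k l then f (co l x₀) j else z (j - k l) with hpushdef
  have hpush : ∀ (l : Fin n) (x : Cn n), f (co l x) = push l (f x) := by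
    intro l x
    funext j
    exact hpushkey l x j
  have hPlF : ∀ l, push l '' F ⊆ F := by
    rintro l _ ⟨_, ⟨x, rfl⟩, rfl⟩
    exact ⟨co l x, hpush l x⟩
  have hcovF : ∀ z ∈ F, ∃ l, z ∈ push l '' F := by
    rintro _ ⟨x, rfl⟩
    refine ⟨x 0, f (fun i => x (i + 1)), ⟨_, rfl⟩, ?_⟩
    rw [← hpush]
    exact congrArg f (co_head_tail x).symm
  have hdisjF : ∀ l m : Fin n, l ≠ m → ∀ z,
      z ∈ push l '' F → z ∈ push m '' F → False := by
    rintro l m hlm z ⟨_, ⟨x, rfl⟩, hzl⟩ ⟨_, ⟨y, rfl⟩, hzm⟩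
    apply hlm
    have hcc : co l x = co m y := by
      apply hfinj
      rw [hpush, hpush, hzl, hzm]
    exact congrFun hcc 0
  -- conclude k ≡ 1
  have hkall : ∀ l, k l = 1 :=
    keyCount hn F hFne hFcomp hFop k hk1 (fun l => f (co l x₀)) push
      (fun l z j => rfl) hPlF hcovF hdisjF
  -- the permutation
  set σ0 : Fin n → Fin n := fun l => f (co l x₀) 0 with hσ0
  have hfσ : ∀ (x : Cn n) (j : ℕ), f x j = σ0 (x j) := by
    intro x j
    induction j generalizing x with
    | zero =>
        conv_lhs => rw [co_head_tail x]
        rw [hpushkey, if_pos (by rw [hkall]; omega)]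
    | succ j ih =>
        conv_lhs => rw [co_head_tail x]
        rw [hpushkey, if_neg (by rw [hkall]; omega), hkall]
        have h2 : j + 1 - 1 = j := by omega
        rw [h2, ih]
  have hσinj : Function.Injective σ0 := by
    intro l m hlm
    have hff : f (co l x₀) = f (co m x₀) := by
      funext j
      rw [hfσ, hfσ]
      cases j with
      | zero => simpa using hlm
      | succ j => rfl
    have := hfinj hff
    exact congrFun this 0
  refine ⟨Equiv.ofBijective σ0 (Finite.injective_iff_bijective.mp hσinj),
    (g x₀).1, List.ofFn (fun i : Fin N => (g x₀).2 i), fun x => ?_⟩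
  show g x = _
  refine Prod.ext (hfst x) (funext fun i => ?_)
  rw [hgsnd x i, wCat_snd]
  simp only [List.length_ofFn]
  by_cases hi : i < N
  · rw [if_pos hi, dif_pos hi]
    simp [List.get_ofFn]
  · rw [if_neg hi, dif_neg hi]
    exact hfσ x (i - N)

end HigmanAut
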